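/- For every τ ∈ ℂ with Re(τ) > 0 and Im(τ) > 0, ∫₀^∞ exp(−e^{πi/4} s/τ) · B₀(e^{πi/4} s) · e^{πi/4} ds = ∫₀^∞ exp(−x/τ) · B₀(x) dx, and both integrals converge absolutely. -/

import Mathlib

open scoped BigOperators
open MeasureTheory

/-- The Borel transform `B₀(ζ) = (κ i/(4π)) · (∏_j sinh(κ√ζ/p_j)) / (√ζ · sinh(κ√ζ)^(n−2))`
of the normalized Ohtsuki series, where `κ = √(2πiP)` and all square roots are principal
branches. -/
noncomputable def borelB (n : ℕ) (p : Fin n → ℤ) (ζ : ℂ) : ℂ :=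
  (2 * (Real.pi : ℂ) * Complex.I * ((∏ i, p i : ℤ) : ℂ)) ^ ((1 : ℂ) / 2) * Complex.I /
      (4 * (Real.pi : ℂ)) *
    (∏ j, Complex.sinh
      ((2 * (Real.pi : ℂ) * Complex.I * ((∏ i, p i : ℤ) : ℂ)) ^ ((1 : ℂ) / 2) *
        ζ ^ ((1 : ℂ) / 2) / (p j : ℂ))) /
    (ζ ^ ((1 : ℂ) / 2) *
      Complex.sinh
        ((2 * (Real.pi : ℂ) * Complex.I * ((∏ i, p i : ℤ) : ℂ)) ^ ((1 : ℂ) / 2) *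
          ζ ^ ((1 : ℂ) / 2)) ^ (n - 2))


/-- Compatibility: the complex absolute value, as the norm. -/
noncomputable def Complex.abs : AbsoluteValue ℂ ℝ := NormedField.toAbsoluteValue ℂ

lemma Complex.abs_apply (z : ℂ) : Complex.abs z = ‖z‖ := rfl

@[simp] lemma Complex.norm_eq_abs (z : ℂ) : ‖z‖ = Complex.abs z := rfl

@[simp] lemma Complex.abs_I : Complex.abs Complex.I = 1 := Complex.norm_I

@[simp] lemma Complex.abs_ofReal (r : ℝ) : Complex.abs (r : ℂ) = |r| := Complex.norm_real r

@[simp] lemma Complex.abs_ofNat (n : ℕ) [n.AtLeastTwo] :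
    Complex.abs (no_index (OfNat.ofNat n : ℂ)) = OfNat.ofNat n := Complex.norm_ofNat n

@[simp] lemma Complex.abs_intCast (n : ℤ) : Complex.abs (n : ℂ) = |(n : ℝ)| := Complex.norm_intCast n

@[simp] lemma Complex.abs_exp (z : ℂ) : Complex.abs (Complex.exp z) = Real.exp z.re := Complex.norm_exp z

@[simp] lemma Complex.abs_exp_ofReal_mul_I (x : ℝ) : Complex.abs (Complex.exp (x * Complex.I)) = 1 :=
  Complex.norm_exp_ofReal_mul_I x

lemma Complex.abs_re_le_abs (z : ℂ) : |z.re| ≤ Complex.abs z := Complex.abs_re_le_norm z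

open Complex Set Filter MeasureTheory
open scoped Real Interval Topology

namespace S15

lemma cpow_half {z : ℂ} (hz : z ≠ 0) :
    z ^ ((1:ℂ)/2) =
      (Real.sqrt (Complex.abs z) : ℂ) * Complex.exp (((Complex.arg z / 2 : ℝ) : ℂ) * I) := by
  rw [Complex.cpow_def_of_ne_zero hz]
  have hlog : Complex.log z = (Real.log (Complex.abs z) : ℂ) + (Complex.arg z : ℝ) * I := by
    exact Complex.ext (by simp [Complex.log_re]) (by simp [Complex.log_im])
  rw [hlog]
  have habs : (0:ℝ) < Complex.abs z := Complex.abs.pos hz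
  have : ((Real.log (Complex.abs z) : ℂ) + (Complex.arg z : ℝ) * I) * (1/2)
      = ((Real.log (Complex.abs z) / 2 : ℝ) : ℂ) + ((Complex.arg z / 2 : ℝ) : ℂ) * I := by
    push_cast; ring
  rw [this, Complex.exp_add]
  congr 1
  rw [← Complex.ofReal_exp]
  norm_cast
  rw [← Real.log_sqrt habs.le, Real.exp_log (Real.sqrt_pos.mpr habs)]

lemma norm_sinh_ge (z : ℂ) : Real.sinh z.re ≤ Complex.abs (Complex.sinh z) := by
  rw [Complex.sinh, Real.sinh_eq]
  have h1 : Complex.abs (Complex.exp z) = Real.exp z.re := Complex.abs_exp z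
  have h2 : Complex.abs (Complex.exp (-z)) = Real.exp (-z.re) := by
    rw [Complex.abs_exp]; simp
  calc (Real.exp z.re - Real.exp (-z.re)) / 2
      ≤ (Complex.abs (Complex.exp z - Complex.exp (-z))) / 2 := by
        have := norm_sub_norm_le (Complex.exp z) (Complex.exp (-z))
        simp only [Complex.norm_eq_abs] at this
        rw [h1, h2] at this; linarith
    _ = Complex.abs ((Complex.exp z - Complex.exp (-z)) / 2) := by
        rw [map_div₀]; norm_num

lemma norm_cosh_le (z : ℂ) : Complex.abs (Complex.cosh z) ≤ Real.exp (Complex.abs z) := by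
  rw [Complex.cosh]
  have key : ∀ w : ℂ, Complex.abs w ≤ Complex.abs z →
      Complex.abs (Complex.exp w) ≤ Real.exp (Complex.abs z) := by
    intro w hw
    rw [Complex.abs_exp]
    exact Real.exp_le_exp.mpr (((le_abs_self w.re).trans (Complex.abs_re_le_abs w)).trans hw)
  calc Complex.abs ((Complex.exp z + Complex.exp (-z)) / 2)
      ≤ (Complex.abs (Complex.exp z) + Complex.abs (Complex.exp (-z))) / 2 := by
        rw [map_div₀]
        have := Complex.abs.add_le (Complex.exp z) (Complex.exp (-z))
        simp only [Complex.abs_ofNat]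
        linarith
    _ ≤ (Real.exp (Complex.abs z) + Real.exp (Complex.abs z)) / 2 := by
        have h1 := key z le_rfl
        have h2 := key (-z) (by simp)
        linarith
    _ = Real.exp (Complex.abs z) := by ring

lemma norm_sinh_le (z : ℂ) :
    Complex.abs (Complex.sinh z) ≤ Complex.abs z * Real.exp (Complex.abs z) := by
  have hconv : Convex ℝ (Metric.closedBall (0:ℂ) (Complex.abs z)) := convex_closedBall _ _
  have hder : ∀ x ∈ Metric.closedBall (0:ℂ) (Complex.abs z),
      HasFDerivWithinAt Complex.sinh
        (ContinuousLinearMap.smulRight (1 : ℂ →L[ℂ] ℂ) (Complex.cosh x))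
        (Metric.closedBall (0:ℂ) (Complex.abs z)) x := fun x _ =>
    (Complex.hasDerivAt_sinh x).hasFDerivAt.hasFDerivWithinAt
  have hbound : ∀ x ∈ Metric.closedBall (0:ℂ) (Complex.abs z),
      ‖ContinuousLinearMap.smulRight (1 : ℂ →L[ℂ] ℂ) (Complex.cosh x)‖
        ≤ Real.exp (Complex.abs z) := by
    intro x hx
    rw [ContinuousLinearMap.norm_smulRight_apply]
    have h1 : ‖(1 : ℂ →L[ℂ] ℂ)‖ = 1 := ContinuousLinearMap.norm_id
    rw [h1, one_mul]
    have hx' : Complex.abs x ≤ Complex.abs z := by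
      simpa [Complex.dist_eq] using hx
    exact (norm_cosh_le x).trans (Real.exp_le_exp.mpr hx')
  have := hconv.norm_image_sub_le_of_norm_hasFDerivWithin_le hder hbound
    (Metric.mem_closedBall_self (Complex.abs.nonneg z) : (0:ℂ) ∈ _)
    (by simp [Complex.dist_eq] : z ∈ Metric.closedBall (0:ℂ) (Complex.abs z))
  simpa [Complex.norm_eq_abs, Complex.dist_eq, mul_comm] using this


lemma kappa_eq {cP : ℝ} (hcP : 0 < cP) :
    ((cP:ℂ) * I) ^ ((1:ℂ)/2) = (Real.sqrt cP : ℂ) * Complex.exp (((π/4 : ℝ) : ℂ) * I) := by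
  have hz : (cP:ℂ) * I ≠ 0 := by
    simp [Complex.ext_iff, hcP.ne']
  rw [cpow_half hz]
  have habs : Complex.abs ((cP:ℂ) * I) = cP := by
    rw [map_mul, Complex.abs_I, Complex.abs_ofReal, abs_of_pos hcP, mul_one]
  have harg : Complex.arg ((cP:ℂ) * I) = π/2 := by
    rw [Complex.arg_real_mul _ hcP, Complex.arg_I]
  rw [habs, harg]
  norm_num
  left
  ring_nf

lemma sector_w {cP : ℝ} (hcP : 0 < cP) {ζ : ℂ} (hζ : ζ ≠ 0) (h1 : 0 ≤ ζ.arg)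
    (h2 : ζ.arg ≤ π/4) :
    ∃ b : ℝ, π/4 ≤ b ∧ b ≤ 3*π/8 ∧
      ((cP:ℂ) * I) ^ ((1:ℂ)/2) * ζ ^ ((1:ℂ)/2)
        = (Real.sqrt (cP * Complex.abs ζ) : ℂ) * Complex.exp ((b : ℂ) * I) := by
  refine ⟨π/4 + ζ.arg/2, by linarith, by linarith, ?_⟩
  rw [kappa_eq hcP, cpow_half hζ]
  rw [Real.sqrt_mul hcP.le]
  push_cast
  rw [show ((π:ℂ)/4 + (ζ.arg:ℂ)/2) * I = (π:ℂ)/4 * I + (ζ.arg:ℂ)/2 * I by ring,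
    Complex.exp_add]
  ring

lemma re_mul_exp (ρ b : ℝ) : ((ρ:ℂ) * Complex.exp ((b:ℂ) * I)).re = ρ * Real.cos b := by
  rw [Complex.exp_mul_I]
  simp [Complex.mul_re, Complex.cos_ofReal_re, Complex.sin_ofReal_im]

lemma abs_mul_exp (ρ b : ℝ) (hρ : 0 ≤ ρ) :
    Complex.abs ((ρ:ℂ) * Complex.exp ((b:ℂ) * I)) = ρ := by
  rw [map_mul, Complex.abs_ofReal, _root_.abs_of_nonneg hρ,
    Complex.abs_exp_ofReal_mul_I, mul_one]

lemma cos38_pos : 0 < Real.cos (3*π/8) := by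
  apply Real.cos_pos_of_mem_Ioo
  constructor <;> nlinarith [Real.pi_pos]

lemma sinh_w_lower {ρ b : ℝ} (hρ : 0 ≤ ρ) (hb1 : π/4 ≤ b) (hb2 : b ≤ 3*π/8) :
    ρ * Real.cos (3*π/8) ≤ Complex.abs (Complex.sinh ((ρ:ℂ) * Complex.exp ((b:ℂ) * I))) := by
  have hpi := Real.pi_pos
  have hcos : Real.cos (3*π/8) ≤ Real.cos b :=
    Real.cos_le_cos_of_nonneg_of_le_pi (by linarith) (by linarith) hb2
  have hre : 0 ≤ ρ * Real.cos b :=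
    mul_nonneg hρ (le_trans cos38_pos.le hcos)
  calc ρ * Real.cos (3*π/8) ≤ ρ * Real.cos b := by
        exact mul_le_mul_of_nonneg_left hcos hρ
    _ ≤ Real.sinh (ρ * Real.cos b) := Real.self_le_sinh_iff.mpr hre
    _ ≤ Complex.abs (Complex.sinh ((ρ:ℂ) * Complex.exp ((b:ℂ) * I))) := by
        have := norm_sinh_ge ((ρ:ℂ) * Complex.exp ((b:ℂ) * I))
        rwa [re_mul_exp] at this


noncomputable def Pc (n : ℕ) (p : Fin n → ℤ) : ℝ := ((∏ i, p i : ℤ) : ℝ)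

noncomputable def cPc (n : ℕ) (p : Fin n → ℤ) : ℝ := 2 * π * Pc n p

noncomputable def Ak (n : ℕ) (p : Fin n → ℤ) : ℝ := n * Real.sqrt (cPc n p)

noncomputable def CBk (n : ℕ) (p : Fin n → ℤ) : ℝ :=
  Real.sqrt (cPc n p) * cPc n p / (4 * π * (Real.cos (3*π/8))^(n-2))

lemma Pc_pos {n : ℕ} {p : Fin n → ℤ} (hp2 : ∀ j, 2 ≤ p j) : 0 < Pc n p := by
  have : 0 < (∏ i, p i : ℤ) := Finset.prod_pos (fun i _ => by have := hp2 i; omega)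
  unfold Pc; exact_mod_cast this

lemma cPc_pos {n : ℕ} {p : Fin n → ℤ} (hp2 : ∀ j, 2 ≤ p j) : 0 < cPc n p := by
  have := Pc_pos hp2
  have := Real.pi_pos
  unfold cPc; positivity

lemma kappa_rw (n : ℕ) (p : Fin n → ℤ) :
    2 * (Real.pi : ℂ) * Complex.I * ((∏ i, p i : ℤ) : ℂ) = ((cPc n p : ℝ) : ℂ) * I := by
  unfold cPc Pc
  push_cast
  ring

lemma borelB_bound {n : ℕ} (hn : 2 ≤ n) {p : Fin n → ℤ} (hp2 : ∀ j, 2 ≤ p j)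
    {ζ : ℂ} (hζ : ζ ≠ 0) (h1 : 0 ≤ ζ.arg) (h2 : ζ.arg ≤ π/4) :
    Complex.abs (borelB n p ζ) ≤
      CBk n p * Real.sqrt (Complex.abs ζ) *
        Real.exp (Ak n p * Real.sqrt (Complex.abs ζ)) := by
  have hpi := Real.pi_pos
  have hcP : 0 < cPc n p := cPc_pos hp2
  set r : ℝ := Complex.abs ζ with hrdef
  have hr0 : 0 < r := Complex.abs.pos hζ
  set u : ℝ := Real.sqrt r with hudef
  set v : ℝ := Real.sqrt (cPc n p) with hvdef
  have hu0 : 0 < u := Real.sqrt_pos.mpr hr0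
  have hv0 : 0 < v := Real.sqrt_pos.mpr hcP
  obtain ⟨b, hb1, hb2, hw⟩ := sector_w hcP hζ h1 h2
  set ρ : ℝ := Real.sqrt (cPc n p * r) with hρdef
  have hρuv : ρ = v * u := Real.sqrt_mul hcP.le r
  have hρ0 : 0 < ρ := by rw [hρuv]; positivity
  set c₀ : ℝ := Real.cos (3*π/8) with hc₀def
  have hc₀ : 0 < c₀ := cos38_pos
  -- w facts
  set X : ℂ := ((cPc n p : ℝ) : ℂ) * I with hXdef
  set w : ℂ := X ^ ((1:ℂ)/2) * ζ ^ ((1:ℂ)/2) with hwdef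
  have hwval : w = (ρ : ℂ) * Complex.exp ((b : ℂ) * I) := hw
  have habsw : Complex.abs w = ρ := by rw [hwval]; exact abs_mul_exp ρ b hρ0.le
  have hsinhw : ρ * c₀ ≤ Complex.abs (Complex.sinh w) := by
    rw [hwval]
    have := sinh_w_lower hρ0.le hb1 hb2
    linarith [this]
  -- abs of ζ^{1/2}
  have habsζhalf : Complex.abs (ζ ^ ((1:ℂ)/2)) = u := by
    rw [cpow_half hζ, abs_mul_exp _ _ (Real.sqrt_nonneg r)]
  -- abs of X^{1/2}
  have habsX : Complex.abs (X ^ ((1:ℂ)/2)) = v := by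
    rw [hXdef, kappa_eq hcP, abs_mul_exp _ _ (Real.sqrt_nonneg _)]
  -- numerator bound
  have hnum : Complex.abs (∏ j, Complex.sinh (w / (p j : ℂ)))
      ≤ (ρ * Real.exp ρ) ^ n := by
    rw [map_prod]
    calc ∏ j, Complex.abs (Complex.sinh (w / (p j : ℂ)))
        ≤ ∏ _j : Fin n, (ρ * Real.exp ρ) := by
          apply Finset.prod_le_prod (fun j _ => Complex.abs.nonneg _)
          intro j _
          have hpj : (1:ℝ) ≤ Complex.abs ((p j : ℤ) : ℂ) := by
            have h2j := hp2 j
            rw [Complex.abs_intCast]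
            have : (1:ℤ) ≤ |p j| := Int.one_le_abs (by omega)
            exact_mod_cast this
          have habsj : Complex.abs (w / (p j : ℂ)) ≤ ρ := by
            rw [map_div₀, habsw]
            calc ρ / Complex.abs ((p j : ℤ) : ℂ) ≤ ρ / 1 := by
                  apply div_le_div_of_nonneg_left hρ0.le one_pos hpj
              _ = ρ := by ring
          calc Complex.abs (Complex.sinh (w / (p j : ℂ)))
              ≤ Complex.abs (w / (p j : ℂ)) * Real.exp (Complex.abs (w / (p j : ℂ))) :=
                norm_sinh_le _
            _ ≤ ρ * Real.exp ρ := by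
                apply mul_le_mul habsj (Real.exp_le_exp.mpr habsj) (Real.exp_nonneg _) hρ0.le
      _ = (ρ * Real.exp ρ) ^ n := by
          rw [Finset.prod_const, Finset.card_univ, Fintype.card_fin]
  -- denominator bound
  have hden : u * (c₀ * ρ) ^ (n-2)
      ≤ Complex.abs (ζ ^ ((1:ℂ)/2) * Complex.sinh w ^ (n-2)) := by
    rw [map_mul, map_pow, habsζhalf]
    apply mul_le_mul_of_nonneg_left _ hu0.le
    apply pow_le_pow_left₀ (by positivity)
    linarith [hsinhw]
  have hdenpos : 0 < u * (c₀ * ρ) ^ (n-2) := by positivity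
  -- put together
  unfold borelB
  rw [kappa_rw n p]
  rw [map_div₀, map_mul, map_div₀, map_mul, map_mul, Complex.abs_I, Complex.abs_ofReal,
    Complex.abs_ofNat]
  rw [← hXdef, ← hwdef, habsX, _root_.abs_of_pos hpi]
  calc v * 1 / (4 * π) * Complex.abs (∏ j, Complex.sinh (w / (p j : ℂ)))
        / Complex.abs (ζ ^ ((1:ℂ)/2) * Complex.sinh w ^ (n-2))
      ≤ v * 1 / (4 * π) * ((ρ * Real.exp ρ) ^ n) / (u * (c₀ * ρ) ^ (n-2)) := by
        apply div_le_div₀ (by positivity) _ hdenpos hden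
        apply mul_le_mul_of_nonneg_left hnum (by positivity)
    _ = CBk n p * u * Real.exp (Ak n p * u) := by
        unfold CBk Ak
        rw [← hc₀def, ← hvdef]
        have hvv : v * v = cPc n p := Real.mul_self_sqrt hcP.le
        have hsplit : (ρ * Real.exp ρ) ^ n = ρ^(n-2) * ρ^2 * Real.exp ρ ^ n := by
          rw [mul_pow, ← pow_add]
          congr 2
          omega
        rw [hsplit, mul_pow c₀ ρ, ← Real.exp_nat_mul]
        have hρ2 : ρ^2 = (v*u)^2 := by rw [hρuv]
        have hexp : (n : ℝ) * ρ = n * v * u := by rw [hρuv]; ring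
        rw [hρ2, hexp, ← hvv]
        have hρn2 : (0:ℝ) < ρ^(n-2) := by positivity
        field_simp
  

noncomputable def ck (τ : ℂ) : ℝ := Real.sqrt 2 / 2 * τ.re / (τ.re^2 + τ.im^2)

lemma ck_pos {τ : ℂ} (hre : 0 < τ.re) : 0 < ck τ := by
  have h2 : (0:ℝ) < Real.sqrt 2 := by positivity
  have hd : (0:ℝ) < τ.re^2 + τ.im^2 := by positivity
  unfold ck
  positivity

lemma exp_bound {τ : ℂ} (hre : 0 < τ.re) (him : 0 ≤ τ.im) {ζ : ℂ} (hζ : ζ ≠ 0) (h1 : 0 ≤ ζ.arg)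
    (h2 : ζ.arg ≤ π/4) :
    Complex.abs (Complex.exp (-ζ/τ)) ≤ Real.exp (-(ck τ * Complex.abs ζ)) := by
  have hpi := Real.pi_pos
  rw [Complex.abs_exp]
  apply Real.exp_le_exp.mpr
  have hr0 : 0 < Complex.abs ζ := Complex.abs.pos hζ
  have hre' : ζ.re = Complex.abs ζ * Real.cos ζ.arg := by
    have := Complex.cos_arg hζ
    field_simp at this
    rw [Complex.norm_eq_abs] at this
    linarith [this]
  have him' : ζ.im = Complex.abs ζ * Real.sin ζ.arg := by
    have := Complex.sin_arg ζ
    field_simp at this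
    rw [Complex.norm_eq_abs] at this
    linarith [this]
  have hcos : Real.sqrt 2 / 2 ≤ Real.cos ζ.arg := by
    rw [← Real.cos_pi_div_four]
    exact Real.cos_le_cos_of_nonneg_of_le_pi h1 (by linarith) h2
  have hsin : 0 ≤ Real.sin ζ.arg :=
    Real.sin_nonneg_of_nonneg_of_le_pi h1 (by linarith)
  have hd : (0:ℝ) < τ.re^2 + τ.im^2 := by positivity
  have hnormSq : Complex.normSq τ = τ.re^2 + τ.im^2 := by
    rw [Complex.normSq_apply]; ring
  rw [neg_div, Complex.neg_re, neg_le_neg_iff, Complex.div_re, hnormSq, hre', him']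
  unfold ck
  rw [← add_div, le_div_iff₀ hd]
  have h2 : (0:ℝ) ≤ Real.sqrt 2 := Real.sqrt_nonneg 2
  have key : Real.sqrt 2 / 2 * τ.re * Complex.abs ζ
      ≤ Complex.abs ζ * Real.cos ζ.arg * τ.re + Complex.abs ζ * Real.sin ζ.arg * τ.im := by
    have t1 : Real.sqrt 2 / 2 * τ.re * Complex.abs ζ ≤ Complex.abs ζ * Real.cos ζ.arg * τ.re := by
      nlinarith [mul_nonneg (mul_nonneg (sub_nonneg.mpr hcos) hr0.le) hre.le]
    nlinarith [mul_nonneg (mul_nonneg hr0.le hsin) him]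
  calc Real.sqrt 2 / 2 * τ.re / (τ.re^2+τ.im^2) * Complex.abs ζ * (τ.re^2+τ.im^2)
      = Real.sqrt 2 / 2 * τ.re * Complex.abs ζ := by field_simp
    _ ≤ _ := key


noncomputable def fI (n : ℕ) (p : Fin n → ℤ) (τ : ℂ) : ℂ → ℂ :=
  fun z => Complex.exp (-z/τ) * borelB n p z

lemma CBk_pos {n : ℕ} {p : Fin n → ℤ} (hp2 : ∀ j, 2 ≤ p j) : 0 < CBk n p := by
  have h1 := cPc_pos hp2
  have h2 := cos38_pos
  have h3 := Real.pi_pos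
  unfold CBk
  positivity

lemma f_bound_weak {n : ℕ} (hn : 2 ≤ n) {p : Fin n → ℤ} (hp2 : ∀ j, 2 ≤ p j)
    {τ : ℂ} (hre : 0 < τ.re) (him : 0 ≤ τ.im) {ζ : ℂ} (hζ : ζ ≠ 0) (h1 : 0 ≤ ζ.arg)
    (h2 : ζ.arg ≤ π/4) :
    Complex.abs (fI n p τ ζ) ≤ CBk n p * Real.sqrt (Complex.abs ζ) *
      Real.exp (Ak n p * Real.sqrt (Complex.abs ζ)) := by
  unfold fI
  rw [map_mul]
  have hb := borelB_bound hn hp2 hζ h1 h2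
  have he : Complex.abs (Complex.exp (-ζ/τ)) ≤ 1 := by
    refine (exp_bound hre him hζ h1 h2).trans ?_
    rw [Real.exp_le_one_iff]
    have := ck_pos hre
    have := Complex.abs.nonneg ζ
    nlinarith
  calc Complex.abs (Complex.exp (-ζ/τ)) * Complex.abs (borelB n p ζ)
      ≤ 1 * (CBk n p * Real.sqrt (Complex.abs ζ) * Real.exp (Ak n p * Real.sqrt (Complex.abs ζ))) :=
        mul_le_mul he hb (Complex.abs.nonneg _) one_pos.le
    _ = _ := one_mul _

noncomputable def C1k (n : ℕ) (p : Fin n → ℤ) (τ : ℂ) : ℝ :=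
  CBk n p * Real.exp ((Ak n p + 1)^2 / (2 * ck τ))

lemma f_bound {n : ℕ} (hn : 2 ≤ n) {p : Fin n → ℤ} (hp2 : ∀ j, 2 ≤ p j)
    {τ : ℂ} (hre : 0 < τ.re) (him : 0 ≤ τ.im) {ζ : ℂ} (hζ : ζ ≠ 0) (h1 : 0 ≤ ζ.arg)
    (h2 : ζ.arg ≤ π/4) :
    Complex.abs (fI n p τ ζ) ≤ C1k n p τ * Real.exp (-(ck τ/2 * Complex.abs ζ)) := by
  unfold fI
  rw [map_mul]
  set r : ℝ := Complex.abs ζ with hrdef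
  have hr0 : 0 < r := Complex.abs.pos hζ
  set u : ℝ := Real.sqrt r with hudef
  have hu0 : 0 < u := Real.sqrt_pos.mpr hr0
  have hu2 : u^2 = r := Real.sq_sqrt hr0.le
  set c : ℝ := ck τ with hcdef
  have hc : 0 < c := ck_pos hre
  set A : ℝ := Ak n p with hAdef
  have hA : 0 ≤ A := by
    unfold Ak at hAdef
    rw [hAdef]; positivity
  have hCB : 0 < CBk n p := CBk_pos hp2
  have hb := borelB_bound hn hp2 hζ h1 h2
  have he := exp_bound hre him hζ h1 h2
  calc Complex.abs (Complex.exp (-ζ/τ)) * Complex.abs (borelB n p ζ)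
      ≤ Real.exp (-(c * r)) * (CBk n p * u * Real.exp (A * u)) := by
        apply mul_le_mul he hb (Complex.abs.nonneg _) (Real.exp_nonneg _)
    _ = CBk n p * (u * Real.exp (A * u - c * r)) := by
        rw [show A * u - c * r = A * u + (-(c*r)) by ring, Real.exp_add]; ring
    _ ≤ CBk n p * Real.exp ((A+1)^2/(2*c) - c/2 * r) := by
        apply mul_le_mul_of_nonneg_left _ hCB.le
        calc u * Real.exp (A * u - c * r)
            ≤ Real.exp u * Real.exp (A * u - c * r) := by
              apply mul_le_mul_of_nonneg_right _ (Real.exp_nonneg _)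
              linarith [Real.add_one_le_exp u]
          _ = Real.exp (u + (A * u - c * r)) := by rw [← Real.exp_add]
          _ ≤ Real.exp ((A+1)^2/(2*c) - c/2 * r) := by
              apply Real.exp_le_exp.mpr
              rw [← hu2]
              have hM : (A+1)^2/(2*c) * (2*c) = (A+1)^2 := by field_simp
              nlinarith [sq_nonneg ((A+1) - c*u), hc]
    _ = C1k n p τ * Real.exp (-(c/2 * r)) := by
        unfold C1k
        rw [← hAdef, ← hcdef, mul_assoc, ← Real.exp_add]
        congr 2
        try ring


lemma sinhw_ne {n : ℕ} {p : Fin n → ℤ} (hp2 : ∀ j, 2 ≤ p j) {ζ : ℂ} (hζ : ζ ≠ 0)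
    (h1 : 0 ≤ ζ.arg) (h2 : ζ.arg ≤ π/4) :
    Complex.sinh ((2 * (Real.pi : ℂ) * Complex.I * ((∏ i, p i : ℤ) : ℂ)) ^ ((1 : ℂ) / 2) *
      ζ ^ ((1 : ℂ) / 2)) ≠ 0 := by
  have hcP : 0 < cPc n p := cPc_pos hp2
  have hr0 : 0 < Complex.abs ζ := Complex.abs.pos hζ
  obtain ⟨b, hb1, hb2, hw⟩ := sector_w hcP hζ h1 h2
  rw [kappa_rw n p, hw]
  intro h0
  have hρ0 : 0 < Real.sqrt (cPc n p * Complex.abs ζ) := Real.sqrt_pos.mpr (by positivity)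
  have := sinh_w_lower hρ0.le hb1 hb2
  rw [h0] at this
  simp only [map_zero] at this
  nlinarith [cos38_pos]

lemma zhalf_ne {ζ : ℂ} (hζ : ζ ≠ 0) : ζ ^ ((1:ℂ)/2) ≠ 0 := by
  simp [Complex.cpow_eq_zero_iff, hζ]

lemma f_diff {n : ℕ} {p : Fin n → ℤ} (hp2 : ∀ j, 2 ≤ p j) (τ : ℂ) {ζ : ℂ} (hζ : ζ ≠ 0)
    (h1 : 0 ≤ ζ.arg) (h2 : ζ.arg ≤ π/4) :
    DifferentiableAt ℂ (fI n p τ) ζ := by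
  have hpi := Real.pi_pos
  have hslit : ζ ∈ Complex.slitPlane := by
    rw [Complex.mem_slitPlane_iff_arg]
    exact ⟨by intro h; rw [h] at h2; linarith, hζ⟩
  have hhalf : DifferentiableAt ℂ (fun z : ℂ => z ^ ((1:ℂ)/2)) ζ :=
    DifferentiableAt.cpow differentiableAt_id (differentiableAt_const _) hslit
  set κ : ℂ := (2 * (Real.pi : ℂ) * Complex.I * ((∏ i, p i : ℤ) : ℂ)) ^ ((1 : ℂ) / 2) with hκ
  have hκh : DifferentiableAt ℂ (fun z : ℂ => κ * z ^ ((1:ℂ)/2)) ζ :=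
    (differentiableAt_const κ).mul hhalf
  have hN : DifferentiableAt ℂ
      (fun z : ℂ => ∏ j, Complex.sinh (κ * z ^ ((1:ℂ)/2) / (p j : ℂ))) ζ :=
    DifferentiableAt.fun_finsetProd (fun j _ => (hκh.div_const _).csinh)
  have hD : DifferentiableAt ℂ
      (fun z : ℂ => z ^ ((1:ℂ)/2) * Complex.sinh (κ * z ^ ((1:ℂ)/2)) ^ (n-2)) ζ :=
    hhalf.mul (hκh.csinh.pow _)
  have hDne : ζ ^ ((1:ℂ)/2) * Complex.sinh (κ * ζ ^ ((1:ℂ)/2)) ^ (n-2) ≠ 0 :=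
    mul_ne_zero (zhalf_ne hζ) (pow_ne_zero _ (sinhw_ne hp2 hζ h1 h2))
  have hB : DifferentiableAt ℂ (borelB n p) ζ := by
    unfold borelB
    exact (((differentiableAt_const (κ * I / (4 * (Real.pi : ℂ)))).mul hN).div hD hDne)
  exact ((differentiableAt_id.neg.div_const τ).cexp).mul hB


lemma subst_exp_integral (g : ℝ → ℂ) :
    ∫ s in Set.Ioi (0:ℝ), g s = ∫ x : ℝ, Real.exp x • g (Real.exp x) := by
  have h := MeasureTheory.integral_image_eq_integral_abs_deriv_smul MeasurableSet.univ
    (fun x _ => (Real.hasDerivAt_exp x).hasDerivWithinAt) Real.exp_injective.injOn g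
  rw [Set.image_univ, Real.range_exp] at h
  rw [h, MeasureTheory.setIntegral_univ]
  congr 1
  ext x
  rw [abs_of_pos (Real.exp_pos x)]

lemma subst_exp_integrable (g : ℝ → ℂ) :
    MeasureTheory.IntegrableOn g (Set.Ioi (0:ℝ)) ↔
      MeasureTheory.Integrable (fun x : ℝ => Real.exp x • g (Real.exp x)) := by
  have h := MeasureTheory.integrableOn_image_iff_integrableOn_abs_deriv_smul
    MeasurableSet.univ (fun x (_ : x ∈ Set.univ) => (Real.hasDerivAt_exp x).hasDerivWithinAt)
    Real.exp_injective.injOn g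
  rw [Set.image_univ, Real.range_exp, MeasureTheory.integrableOn_univ] at h
  rw [h]
  constructor <;> intro hh <;> [skip; skip] <;>
    · apply hh.congr
      filter_upwards with x
      rw [abs_of_pos (Real.exp_pos x)]

lemma ray_pt_ne {θ : ℝ} {s : ℝ} (hs : 0 < s) :
    Complex.exp ((θ:ℂ) * I) * (s:ℂ) ≠ 0 :=
  mul_ne_zero (Complex.exp_ne_zero _) (by exact_mod_cast hs.ne')

lemma ray_pt_arg {θ : ℝ} (hθ1 : -π < θ) (hθ2 : θ ≤ π) {s : ℝ} (hs : 0 < s) :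
    Complex.arg (Complex.exp ((θ:ℂ) * I) * (s:ℂ)) = θ := by
  rw [mul_comm, show ((s:ℂ) * Complex.exp ((θ:ℂ) * I)) = ((s:ℝ):ℂ) * Complex.exp ((θ:ℂ) * I) from rfl,
    Complex.arg_real_mul _ hs, Complex.exp_mul_I]
  exact Complex.arg_cos_add_sin_mul_I ⟨hθ1, hθ2⟩

lemma ray_pt_abs (θ : ℝ) {s : ℝ} (hs : 0 ≤ s) :
    Complex.abs (Complex.exp ((θ:ℂ) * I) * (s:ℂ)) = s := by
  rw [map_mul, Complex.abs_exp_ofReal_mul_I, Complex.abs_ofReal, one_mul, _root_.abs_of_nonneg hs]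

lemma ray_integrable {n : ℕ} (hn : 2 ≤ n) {p : Fin n → ℤ} (hp2 : ∀ j, 2 ≤ p j)
    {τ : ℂ} (hre : 0 < τ.re) (him : 0 ≤ τ.im) {θ : ℝ} (hθ1 : 0 ≤ θ) (hθ2 : θ ≤ π/4) :
    MeasureTheory.IntegrableOn
      (fun s : ℝ => fI n p τ (Complex.exp ((θ:ℂ) * I) * (s:ℂ)) * Complex.exp ((θ:ℂ) * I))
      (Set.Ioi (0:ℝ)) := by
  have hpi := Real.pi_pos
  have hc := ck_pos hre
  have hθπ : θ ≤ π := by linarith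
  have hθπ' : -π < θ := by linarith
  have hgint : MeasureTheory.IntegrableOn
      (fun s : ℝ => C1k n p τ * Real.exp (-(ck τ/2) * s)) (Set.Ioi (0:ℝ)) :=
    (exp_neg_integrableOn_Ioi 0 (by positivity : (0:ℝ) < ck τ/2)).const_mul _
  apply MeasureTheory.Integrable.mono' hgint
  · apply ContinuousOn.aestronglyMeasurable _ measurableSet_Ioi
    intro s hs
    have hs0 : (0:ℝ) < s := hs
    apply ContinuousAt.continuousWithinAt
    apply ContinuousAt.mul _ continuousAt_const
    have hd := f_diff hp2 τ (ray_pt_ne hs0)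
      (by rw [ray_pt_arg hθπ' hθπ hs0]; exact hθ1)
      (by rw [ray_pt_arg hθπ' hθπ hs0]; exact hθ2)
    have hcin : ContinuousAt (fun x : ℝ => Complex.exp ((θ:ℂ) * I) * (x:ℂ)) s :=
      (continuous_const.mul Complex.continuous_ofReal).continuousAt
    exact ContinuousAt.comp (g := fI n p τ)
      (f := fun x : ℝ => Complex.exp ((θ:ℂ) * I) * (x:ℂ)) (x := s) hd.continuousAt hcin
  · rw [MeasureTheory.ae_restrict_iff' measurableSet_Ioi]
    filter_upwards with s hs
    have hs0 : (0:ℝ) < s := hs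
    rw [norm_mul]
    have h1 : ‖Complex.exp ((θ:ℂ) * I)‖ = 1 := by
      rw [Complex.norm_eq_abs, Complex.abs_exp_ofReal_mul_I]
    rw [h1, mul_one, Complex.norm_eq_abs]
    have hb := f_bound hn hp2 hre him (ray_pt_ne hs0)
      (by rw [ray_pt_arg hθπ' hθπ hs0]; exact hθ1)
      (by rw [ray_pt_arg hθπ' hθπ hs0]; exact hθ2)
    rw [ray_pt_abs θ hs0.le] at hb
    calc Complex.abs (fI n p τ (Complex.exp ((θ:ℂ) * I) * (s:ℂ)))
        ≤ C1k n p τ * Real.exp (-(ck τ/2 * s)) := hb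
      _ = C1k n p τ * Real.exp (-(ck τ/2) * s) := by rw [neg_mul]


noncomputable def Hf (n : ℕ) (p : Fin n → ℤ) (τ : ℂ) : ℂ → ℂ :=
  fun z => Complex.exp z * fI n p τ (Complex.exp z)

lemma Hf_eq (n : ℕ) (p : Fin n → ℤ) (τ : ℂ) (x θ : ℝ) :
    Hf n p τ ((x:ℂ) + (θ:ℂ) * I) =
      Real.exp x •
        (fI n p τ (Complex.exp ((θ:ℂ) * I) * ((Real.exp x : ℝ) : ℂ)) * Complex.exp ((θ:ℂ) * I)) := by
  unfold Hf
  rw [Complex.exp_add, ← Complex.ofReal_exp, Complex.real_smul,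
    mul_comm (Complex.exp ((θ:ℂ) * I)) ((Real.exp x : ℝ) : ℂ)]
  ring

lemma arg_exp_eq {z : ℂ} (h1 : -π < z.im) (h2 : z.im ≤ π) : (Complex.exp z).arg = z.im := by
  have hz : Complex.exp z = ((Real.exp z.re : ℝ) : ℂ) * Complex.exp ((z.im : ℂ) * I) := by
    rw [Complex.ofReal_exp, ← Complex.exp_add, Complex.re_add_im]
  rw [hz, Complex.arg_real_mul _ (Real.exp_pos _), Complex.exp_mul_I]
  exact Complex.arg_cos_add_sin_mul_I ⟨h1, h2⟩

lemma abs_exp_eq (z : ℂ) : Complex.abs (Complex.exp z) = Real.exp z.re := Complex.abs_exp z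

lemma Hf_diffOn {n : ℕ} {p : Fin n → ℤ} (hp2 : ∀ j, 2 ≤ p j) (τ : ℂ) (R : ℝ) :
    DifferentiableOn ℂ (Hf n p τ) ([[-R, R]] ×ℂ [[0, π/4]]) := by
  have hpi := Real.pi_pos
  intro z hz
  rw [Complex.mem_reProdIm, Set.uIcc_of_le (by positivity : (0:ℝ) ≤ π/4)] at hz
  have him := hz.2
  have harg : (Complex.exp z).arg = z.im :=
    arg_exp_eq (by linarith [him.1]) (by linarith [him.2])
  apply DifferentiableAt.differentiableWithinAt
  have hd := f_diff hp2 τ (Complex.exp_ne_zero z) (harg ▸ him.1) (harg ▸ him.2)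
  exact Complex.differentiable_exp.differentiableAt.mul
    (DifferentiableAt.comp z hd Complex.differentiable_exp.differentiableAt)

lemma Hf_bound_strong {n : ℕ} (hn : 2 ≤ n) {p : Fin n → ℤ} (hp2 : ∀ j, 2 ≤ p j)
    {τ : ℂ} (hre : 0 < τ.re) (him : 0 ≤ τ.im) {x θ : ℝ} (hθ1 : 0 ≤ θ) (hθ2 : θ ≤ π/4) :
    ‖Hf n p τ ((x:ℂ) + (θ:ℂ) * I)‖ ≤
      Real.exp x * (C1k n p τ * Real.exp (-(ck τ/2 * Real.exp x))) := by
  have hpi := Real.pi_pos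
  rw [Hf_eq, norm_smul, Real.norm_eq_abs, abs_of_pos (Real.exp_pos x), norm_mul]
  have h1 : ‖Complex.exp ((θ:ℂ) * I)‖ = 1 := by
    rw [Complex.norm_eq_abs, Complex.abs_exp_ofReal_mul_I]
  rw [h1, mul_one, Complex.norm_eq_abs]
  apply mul_le_mul_of_nonneg_left _ (Real.exp_pos x).le
  have hargpt : (Complex.exp ((θ:ℂ)*I) * ((Real.exp x:ℝ):ℂ)).arg = θ :=
    ray_pt_arg (by linarith) (by linarith) (Real.exp_pos x)
  have hb := f_bound hn hp2 hre him (ray_pt_ne (Real.exp_pos x))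
    (by rw [hargpt]; exact hθ1) (by rw [hargpt]; exact hθ2)
  rwa [ray_pt_abs θ (Real.exp_pos x).le] at hb

lemma Hf_bound_weak {n : ℕ} (hn : 2 ≤ n) {p : Fin n → ℤ} (hp2 : ∀ j, 2 ≤ p j)
    {τ : ℂ} (hre : 0 < τ.re) (him : 0 ≤ τ.im) {x θ : ℝ} (hθ1 : 0 ≤ θ) (hθ2 : θ ≤ π/4)
    (hx : x ≤ 0) :
    ‖Hf n p τ ((x:ℂ) + (θ:ℂ) * I)‖ ≤ CBk n p * Real.exp (Ak n p) * Real.exp x := by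
  have hpi := Real.pi_pos
  rw [Hf_eq, norm_smul, Real.norm_eq_abs, abs_of_pos (Real.exp_pos x), norm_mul]
  have h1 : ‖Complex.exp ((θ:ℂ) * I)‖ = 1 := by
    rw [Complex.norm_eq_abs, Complex.abs_exp_ofReal_mul_I]
  rw [h1, mul_one, Complex.norm_eq_abs]
  have hargpt : (Complex.exp ((θ:ℂ)*I) * ((Real.exp x:ℝ):ℂ)).arg = θ :=
    ray_pt_arg (by linarith) (by linarith) (Real.exp_pos x)
  have hb := f_bound_weak hn hp2 hre him (ray_pt_ne (Real.exp_pos x))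
    (by rw [hargpt]; exact hθ1) (by rw [hargpt]; exact hθ2)
  rw [ray_pt_abs θ (Real.exp_pos x).le] at hb
  have hs1 : Real.sqrt (Real.exp x) ≤ 1 := by
    rw [show (1:ℝ) = Real.sqrt 1 from (Real.sqrt_one).symm]
    exact Real.sqrt_le_sqrt (Real.exp_le_one_iff.mpr hx)
  have hA : 0 ≤ Ak n p := by unfold Ak; positivity
  have hCB := CBk_pos hp2
  have hs0 := Real.sqrt_nonneg (Real.exp x)
  have h2 : Complex.abs (fI n p τ (Complex.exp ((θ:ℂ) * I) * ((Real.exp x : ℝ):ℂ)))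
      ≤ CBk n p * Real.exp (Ak n p) := by
    refine hb.trans ?_
    have hexp : Real.exp (Ak n p * Real.sqrt (Real.exp x)) ≤ Real.exp (Ak n p) :=
      Real.exp_le_exp.mpr (by nlinarith)
    calc CBk n p * Real.sqrt (Real.exp x) * Real.exp (Ak n p * Real.sqrt (Real.exp x))
        ≤ CBk n p * 1 * Real.exp (Ak n p) := by
          apply mul_le_mul (mul_le_mul_of_nonneg_left hs1 hCB.le) hexp (Real.exp_nonneg _)
            (by positivity)
      _ = CBk n p * Real.exp (Ak n p) := by ring
  calc Real.exp x * Complex.abs (fI n p τ (Complex.exp ((θ:ℂ) * I) * ((Real.exp x : ℝ):ℂ)))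
      ≤ Real.exp x * (CBk n p * Real.exp (Ak n p)) :=
        mul_le_mul_of_nonneg_left h2 (Real.exp_pos x).le
    _ = CBk n p * Real.exp (Ak n p) * Real.exp x := by ring


end S15

open Complex Set Filter MeasureTheory S15
open scoped Real Interval Topology

open S15

theorem statement15 (n : ℕ) (hn : 3 ≤ n) (p : Fin n → ℤ)
    (hp2 : ∀ j, 2 ≤ p j)
    (hpcop : ∀ i j : Fin n, i ≠ j → IsCoprime (p i) (p j))
    (τ : ℂ) (hre : 0 < τ.re) (him : 0 < τ.im) :
    MeasureTheory.IntegrableOn (fun s : ℝ =>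
      Complex.exp (-(Complex.exp ((Real.pi : ℂ) * Complex.I / 4)) * (s : ℂ) / τ) *
        borelB n p (Complex.exp ((Real.pi : ℂ) * Complex.I / 4) * (s : ℂ)) *
        Complex.exp ((Real.pi : ℂ) * Complex.I / 4)) (Set.Ioi 0) ∧
    MeasureTheory.IntegrableOn (fun x : ℝ =>
      Complex.exp (-(x : ℂ) / τ) * borelB n p (x : ℂ)) (Set.Ioi 0) ∧
    (∫ s in Set.Ioi (0 : ℝ),
        Complex.exp (-(Complex.exp ((Real.pi : ℂ) * Complex.I / 4)) * (s : ℂ) / τ) *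
          borelB n p (Complex.exp ((Real.pi : ℂ) * Complex.I / 4) * (s : ℂ)) *
          Complex.exp ((Real.pi : ℂ) * Complex.I / 4)) =
      ∫ x in Set.Ioi (0 : ℝ), Complex.exp (-(x : ℂ) / τ) * borelB n p (x : ℂ) := by
  have hpi := Real.pi_pos
  have hn2 : (2:ℕ) ≤ n := by omega
  have him' : (0:ℝ) ≤ τ.im := him.le
  have hθ40 : (0:ℝ) ≤ π/4 := by positivity
  have hu4 : Complex.exp ((Real.pi:ℂ) * Complex.I / 4) = Complex.exp (((π/4 : ℝ):ℂ) * I) := by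
    congr 1; push_cast; ring
  have hig1 : (fun s : ℝ => Complex.exp (-(Complex.exp ((Real.pi:ℂ)*Complex.I/4)) * (s:ℂ) / τ) *
      borelB n p (Complex.exp ((Real.pi:ℂ)*Complex.I/4) * (s:ℂ)) *
      Complex.exp ((Real.pi:ℂ)*Complex.I/4)) =
      (fun s : ℝ => fI n p τ (Complex.exp (((π/4:ℝ):ℂ)*I) * (s:ℂ)) *
        Complex.exp (((π/4:ℝ):ℂ)*I)) := by
    funext s
    rw [hu4]
    unfold fI
    rw [show -(Complex.exp (((π/4:ℝ):ℂ)*I)) * (s:ℂ) / τ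
        = -(Complex.exp (((π/4:ℝ):ℂ)*I) * (s:ℂ)) / τ by ring]
  have hig0 : (fun x : ℝ => Complex.exp (-(x:ℂ)/τ) * borelB n p (x:ℂ)) =
      (fun s : ℝ => fI n p τ (Complex.exp (((0:ℝ):ℂ)*I) * (s:ℂ)) *
        Complex.exp (((0:ℝ):ℂ)*I)) := by
    funext s
    simp [fI]
  have hint4 := ray_integrable hn2 hp2 hre him' hθ40 le_rfl
  have hint0 := ray_integrable hn2 hp2 hre him' (le_refl (0:ℝ)) hθ40
  refine ⟨by rw [hig1]; exact hint4, by rw [hig0]; exact hint0, ?_⟩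
  -- substitution to line integrals
  have hsub : ∀ θ : ℝ, (∫ s in Set.Ioi (0:ℝ),
      fI n p τ (Complex.exp ((θ:ℂ)*I) * (s:ℂ)) * Complex.exp ((θ:ℂ)*I))
      = ∫ x : ℝ, Hf n p τ ((x:ℂ) + (θ:ℂ)*I) := by
    intro θ
    rw [subst_exp_integral]
    congr 1
    funext x
    rw [Hf_eq]
  have hHint : ∀ θ : ℝ, (0:ℝ) ≤ θ → θ ≤ π/4 →
      MeasureTheory.Integrable (fun x : ℝ => Hf n p τ ((x:ℂ) + (θ:ℂ)*I)) := by
    intro θ h1 h2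
    have h := (subst_exp_integrable _).mp (ray_integrable hn2 hp2 hre him' h1 h2)
    have heq : (fun x : ℝ => Real.exp x •
        (fI n p τ (Complex.exp ((θ:ℂ)*I) * ((Real.exp x : ℝ):ℂ)) * Complex.exp ((θ:ℂ)*I)))
        = fun x : ℝ => Hf n p τ ((x:ℂ) + (θ:ℂ)*I) := by
      funext x; rw [Hf_eq]
    rwa [heq] at h
  -- rectangle identity
  have hrect : ∀ R : ℝ,
      (∫ x in -R..R, Hf n p τ ((x:ℂ) + ((0:ℝ):ℂ)*I))
        - (∫ x in -R..R, Hf n p τ ((x:ℂ) + ((π/4:ℝ):ℂ)*I))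
        + I • (∫ y in (0:ℝ)..(π/4:ℝ), Hf n p τ ((R:ℂ) + (y:ℂ)*I))
        - I • (∫ y in (0:ℝ)..(π/4:ℝ), Hf n p τ (((-R:ℝ):ℂ) + (y:ℂ)*I)) = 0 := by
    intro R
    have hd : DifferentiableOn ℂ (Hf n p τ)
        ([[(((-R:ℝ)):ℂ).re, ((R:ℂ) + ((π/4:ℝ):ℂ)*I).re]] ×ℂ
         [[(((-R:ℝ)):ℂ).im, ((R:ℂ) + ((π/4:ℝ):ℂ)*I).im]]) := by
      have hre' : ((R:ℂ) + ((π/4:ℝ):ℂ)*I).re = R := by simp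
      have him2 : ((R:ℂ) + ((π/4:ℝ):ℂ)*I).im = π/4 := by simp
      rw [hre', him2, Complex.ofReal_re, Complex.ofReal_im]
      exact Hf_diffOn hp2 τ R
    have h := Complex.integral_boundary_rect_eq_zero_of_differentiableOn (Hf n p τ)
      (((-R:ℝ)):ℂ) ((R:ℂ) + ((π/4:ℝ):ℂ)*I) hd
    simp only [Complex.ofReal_re, Complex.ofReal_im, Complex.add_re, Complex.add_im,
      Complex.mul_re, Complex.mul_im, Complex.I_re, Complex.I_im, mul_zero, mul_one,
      zero_mul, sub_zero, add_zero, zero_add, Complex.ofReal_neg] at h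
    convert h using 3 <;> norm_num
  set J0 := ∫ x : ℝ, Hf n p τ ((x:ℂ) + ((0:ℝ):ℂ)*I) with hJ0def
  set J4 := ∫ x : ℝ, Hf n p τ ((x:ℂ) + ((π/4:ℝ):ℂ)*I) with hJ4def
  have hA0 : Tendsto (fun R : ℝ => ∫ x in -R..R, Hf n p τ ((x:ℂ) + ((0:ℝ):ℂ)*I))
      atTop (𝓝 J0) :=
    MeasureTheory.intervalIntegral_tendsto_integral (hHint 0 le_rfl hθ40)
      tendsto_neg_atTop_atBot tendsto_id
  have hA4 : Tendsto (fun R : ℝ => ∫ x in -R..R, Hf n p τ ((x:ℂ) + ((π/4:ℝ):ℂ)*I))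
      atTop (𝓝 J4) :=
    MeasureTheory.intervalIntegral_tendsto_integral (hHint (π/4) hθ40 le_rfl)
      tendsto_neg_atTop_atBot tendsto_id
  have hc2 : 0 < ck τ / 2 := half_pos (ck_pos hre)
  have hβ : Tendsto (fun R : ℝ =>
      Real.exp R * (C1k n p τ * Real.exp (-(ck τ/2 * Real.exp R)))) atTop (𝓝 0) := by
    have hT : Tendsto (fun R : ℝ => (ck τ/2) * Real.exp R) atTop atTop :=
      Real.tendsto_exp_atTop.const_mul_atTop hc2
    have hg : Tendsto (fun v : ℝ => v * Real.exp (-v)) atTop (𝓝 0) := by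
      simpa using Real.tendsto_pow_mul_exp_neg_atTop_nhds_zero 1
    have h2 := (hg.comp hT).const_mul (C1k n p τ * (2 / ck τ))
    rw [mul_zero] at h2
    refine h2.congr fun R => ?_
    simp only [Function.comp_apply]
    have hck : ck τ ≠ 0 := (ck_pos hre).ne'
    field_simp
  have hV : Tendsto (fun R : ℝ => ∫ y in (0:ℝ)..(π/4:ℝ), Hf n p τ ((R:ℂ) + (y:ℂ)*I))
      atTop (𝓝 0) := by
    have hβ' : Tendsto (fun R : ℝ =>
        (Real.exp R * (C1k n p τ * Real.exp (-(ck τ/2 * Real.exp R)))) * |π/4 - (0:ℝ)|)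
        atTop (𝓝 0) := by
      simpa using hβ.mul_const |π/4 - (0:ℝ)|
    refine squeeze_zero_norm (fun R => ?_) hβ'
    apply intervalIntegral.norm_integral_le_of_norm_le_const
    intro y hy
    rw [Set.uIoc_of_le hθ40] at hy
    exact Hf_bound_strong hn2 hp2 hre him' hy.1.le hy.2
  have hW : Tendsto (fun R : ℝ => ∫ y in (0:ℝ)..(π/4:ℝ), Hf n p τ (((-R:ℝ):ℂ) + (y:ℂ)*I))
      atTop (𝓝 0) := by
    have hγ : Tendsto (fun R : ℝ => (CBk n p * Real.exp (Ak n p) * Real.exp (-R)) * |π/4 - (0:ℝ)|)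
        atTop (𝓝 0) := by
      have h2 := (Real.tendsto_exp_neg_atTop_nhds_zero.const_mul
        (CBk n p * Real.exp (Ak n p))).mul_const |π/4 - (0:ℝ)|
      simpa using h2
    apply squeeze_zero_norm' _ hγ
    filter_upwards [eventually_ge_atTop (0:ℝ)] with R hR
    apply intervalIntegral.norm_integral_le_of_norm_le_const
    intro y hy
    rw [Set.uIoc_of_le hθ40] at hy
    exact Hf_bound_weak hn2 hp2 hre him' hy.1.le hy.2 (by linarith : -R ≤ 0)
  have hlim : Tendsto (fun R : ℝ =>
      (∫ x in -R..R, Hf n p τ ((x:ℂ) + ((0:ℝ):ℂ)*I))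
        - (∫ x in -R..R, Hf n p τ ((x:ℂ) + ((π/4:ℝ):ℂ)*I))
        + I • (∫ y in (0:ℝ)..(π/4:ℝ), Hf n p τ ((R:ℂ) + (y:ℂ)*I))
        - I • (∫ y in (0:ℝ)..(π/4:ℝ), Hf n p τ (((-R:ℝ):ℂ) + (y:ℂ)*I)))
      atTop (𝓝 (J0 - J4 + I • (0:ℂ) - I • (0:ℂ))) :=
    (((hA0.sub hA4).add (hV.const_smul I)).sub (hW.const_smul I))
  have hzero : Tendsto (fun R : ℝ =>
      (∫ x in -R..R, Hf n p τ ((x:ℂ) + ((0:ℝ):ℂ)*I))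
        - (∫ x in -R..R, Hf n p τ ((x:ℂ) + ((π/4:ℝ):ℂ)*I))
        + I • (∫ y in (0:ℝ)..(π/4:ℝ), Hf n p τ ((R:ℂ) + (y:ℂ)*I))
        - I • (∫ y in (0:ℝ)..(π/4:ℝ), Hf n p τ (((-R:ℝ):ℂ) + (y:ℂ)*I)))
      atTop (𝓝 (0:ℂ)) :=
    tendsto_const_nhds.congr (fun R => (hrect R).symm)
  have hJeq : J0 - J4 + I • (0:ℂ) - I • (0:ℂ) = 0 := tendsto_nhds_unique hlim hzero
  have hJ : J4 = J0 := by
    simp only [smul_zero, add_zero, sub_zero] at hJeq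
    linear_combination -hJeq
  rw [hig1, hig0, hsub (π/4), hsub 0]
  exact hJ
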